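/- arXiv:2503.20367 — 2 statements merged into one kernel-verified Lean document; each statement's English description precedes it below -/
import Mathlib

section
/- Let p be an odd prime and let s ≥ 2 be an integer, and let G = ℤ_2 × (ℤ_p)^s. Let S = {(1, 0, …, 0)} ∪ {(0, j, 0, …, 0) : j = 1, …, p−1} ⊆ G, where (0, j, 0, …, 0) has j in the first of the s copies of ℤ_p and 0 elsewhere. Then for all a, b ∈ G with b − a = (1, 0, …, 0), the complement of Cay(G, S), namely Cay(G, G \ (S ∪ {0})), exhibits FR between a and b. -/
set_option maxHeartbeats 1000000
set_option linter.unusedSectionVars false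


open Matrix Filter

/-- Adjacency matrix of the Cayley graph `Cay(G,S)`: `A x y = 1` iff `x - y ∈ S`. -/
noncomputable def cayAdj {G : Type*} [AddCommGroup G] [Fintype G] [DecidableEq G]
    (S : Finset G) : Matrix G G ℂ :=
  Matrix.of fun x y => if x - y ∈ S then 1 else 0

/-- Transition matrix `H(t) = exp(-i t A)` of the Cayley graph `Cay(G,S)`. -/
noncomputable def cayH {G : Type*} [AddCommGroup G] [Fintype G] [DecidableEq G]
    (S : Finset G) (t : ℝ) : Matrix G G ℂ :=
  NormedSpace.exp ((-(Complex.I * (t : ℂ))) • cayAdj S)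

/-- `Cay(G,S)` exhibits pretty good fractional revival (PGFR) between `a` and `b`. -/
def ExhibitsPGFR {G : Type*} [AddCommGroup G] [Fintype G] [DecidableEq G]
    (S : Finset G) (a b : G) : Prop :=
  ∃ (α β : ℂ) (t : ℕ → ℝ), β ≠ 0 ∧ ‖α‖ ^ 2 + ‖β‖ ^ 2 = 1 ∧
    Tendsto (fun k => (cayH S (t k)).mulVec ((Pi.single a 1 : G → ℂ))) atTop
      (nhds (α • (Pi.single a 1 : G → ℂ) + β • (Pi.single b 1 : G → ℂ)))

/-- `Cay(G,S)` exhibits fractional revival (FR) between `a` and `b`. -/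
def ExhibitsFR {G : Type*} [AddCommGroup G] [Fintype G] [DecidableEq G]
    (S : Finset G) (a b : G) : Prop :=
  ∃ (t : ℝ), 0 < t ∧ ∃ α β : ℂ, β ≠ 0 ∧ ‖α‖ ^ 2 + ‖β‖ ^ 2 = 1 ∧
    (cayH S t).mulVec ((Pi.single a 1 : G → ℂ)) =
      α • (Pi.single a 1 : G → ℂ) + β • (Pi.single b 1 : G → ℂ)

/-- `Cay(G,S)` exhibits pretty good state transfer (PGST) between `a` and `b`. -/
def ExhibitsPGST {G : Type*} [AddCommGroup G] [Fintype G] [DecidableEq G]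
    (S : Finset G) (a b : G) : Prop :=
  ∃ (β : ℂ) (t : ℕ → ℝ), ‖β‖ = 1 ∧
    Tendsto (fun k => (cayH S (t k)).mulVec ((Pi.single a 1 : G → ℂ))) atTop
      (nhds (β • (Pi.single b 1 : G → ℂ)))

/-- The eigenvalue `λ_r = Σ_{y ∈ S} exp(2πi r y / n)` of the circulant graph `Cay(ℤ_n, S)`. -/
noncomputable def circEig (n : ℕ) [NeZero n] (S : Finset (ZMod n)) (r : ℕ) : ℂ :=
  ∑ y ∈ S, Complex.exp (2 * Real.pi * Complex.I * r * y.val / n)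

open Nat NormedSpace in
theorem exp_smul_idem' {A : Type*} [NormedRing A] [NormedAlgebra ℂ A] [CompleteSpace A]
    (z : ℂ) (E : A) (hE : E * E = E) :
    NormedSpace.exp (z • E) = 1 + (Complex.exp z - 1) • E := by
  have hEpow : ∀ n : ℕ, E ^ (n + 1) = E := by
    intro n
    induction n with
    | zero => simp
    | succ n ih => rw [pow_succ, ih, hE]
  have hsum : Summable fun n : ℕ => ((n ! : ℂ))⁻¹ • (z • E) ^ n :=
    NormedSpace.expSeries_summable' (𝕂 := ℂ) (z • E)
  have hc : Summable fun n : ℕ => ((n ! : ℂ))⁻¹ • z ^ n :=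
    NormedSpace.expSeries_summable' (𝕂 := ℂ) z
  have hc' : Summable fun n : ℕ => (((n + 1)! : ℂ))⁻¹ • z ^ (n + 1) :=
    (summable_nat_add_iff 1).2 hc
  have hz : Complex.exp z = 1 + ∑' n : ℕ, (((n + 1)! : ℂ))⁻¹ • z ^ (n + 1) := by
    rw [Complex.exp_eq_exp_ℂ, NormedSpace.exp_eq_tsum (𝕂 := ℂ)]
    beta_reduce
    rw [Summable.tsum_eq_zero_add hc]
    simp
  rw [NormedSpace.exp_eq_tsum (𝕂 := ℂ)]
  beta_reduce
  rw [Summable.tsum_eq_zero_add hsum]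
  have h2 : ∀ n : ℕ, ((((n+1)! : ℂ))⁻¹ • (z • E) ^ (n+1)) = ((((n+1)! : ℂ))⁻¹ • z ^ (n+1)) • E := by
    intro n
    rw [smul_pow, hEpow, smul_smul, smul_eq_mul]
  simp_rw [h2]
  rw [Summable.tsum_smul_const hc']
  have : (∑' n : ℕ, (((n + 1)! : ℂ))⁻¹ • z ^ (n + 1)) = Complex.exp z - 1 := by
    rw [hz]; ring
  rw [this]
  simp


open Matrix

section TAux
variable {G : Type*} [AddCommGroup G] [Fintype G] [DecidableEq G]

noncomputable def tmat (h : G) : Matrix G G ℂ := Matrix.circulant (Pi.single h 1)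

lemma tmat_apply (h : G) (x y : G) : tmat h x y = if x - y = h then 1 else 0 := by
  simp [tmat, Pi.single_apply]

lemma tmat_zero : tmat (0 : G) = 1 := Matrix.circulant_single_one ℂ G

lemma tmat_mul (h h' : G) : tmat h * tmat h' = tmat (h + h') := by
  ext x y
  rw [Matrix.mul_apply]
  simp only [tmat_apply]
  have key : ∀ z : G, (if x - z = h then (1:ℂ) else 0) * (if z - y = h' then 1 else 0)
      = if z = x - h then (if x - y = h + h' then (1:ℂ) else 0) else 0 := by
    intro z
    by_cases hz : z = x - h
    · subst hz
      have : (x - (x - h) = h) := by abel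
      rw [if_pos this]
      have : (x - h - y = h') ↔ (x - y = h + h') := by
        constructor
        · intro hh; rw [← hh]; abel
        · intro hh
          have : x - h - y = x - y - h := by abel
          rw [this, hh]; abel
      simp [this]
    · have : ¬(x - z = h) := fun hc => hz (by rw [← hc]; abel)
      simp [this, hz]
  rw [Finset.sum_congr rfl fun z _ => key z, Finset.sum_ite_eq' Finset.univ (x - h)]
  simp

lemma commute_tmat (h h' : G) : Commute (tmat h) (tmat h') := by
  unfold Commute SemiconjBy
  rw [tmat_mul, tmat_mul, add_comm]

end TAux

section JC
variable {G : Type*} [AddCommGroup G] [Fintype G] [DecidableEq G]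
variable {K : Type*} [AddCommGroup K] [Fintype K]

noncomputable def jmat (G : Type*) [AddCommGroup G] [Fintype G] [DecidableEq G] :
    Matrix G G ℂ := ∑ h : G, tmat h

noncomputable def cmat (ι : K → G) : Matrix G G ℂ := ∑ c : K, tmat (ι c)

lemma jmat_mul_tmat (h : G) : jmat G * tmat h = jmat G := by
  rw [jmat, Finset.sum_mul]
  simp_rw [tmat_mul]
  exact Fintype.sum_equiv (Equiv.addRight h) _ _ fun x => rfl

lemma tmat_mul_jmat (h : G) : tmat h * jmat G = jmat G := by
  rw [jmat, Finset.mul_sum]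
  simp_rw [tmat_mul]
  exact Fintype.sum_equiv (Equiv.addLeft h) _ _ fun x => rfl

lemma jmat_mul_jmat : jmat G * jmat G = (Fintype.card G : ℂ) • jmat G := by
  nth_rewrite 1 [jmat]
  rw [Finset.sum_mul]
  simp_rw [tmat_mul_jmat (G := G)]
  rw [Finset.sum_const, Finset.card_univ, Nat.cast_smul_eq_nsmul]

lemma cmat_mul_cmat (ι : K → G) (hadd : ∀ a b : K, ι (a + b) = ι a + ι b) :
    cmat ι * cmat ι = (Fintype.card K : ℂ) • cmat ι := by
  rw [cmat, Finset.sum_mul]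
  have : ∀ c : K, tmat (ι c) * (∑ c' : K, tmat (ι c')) = cmat ι := by
    intro c
    rw [Finset.mul_sum]
    simp_rw [tmat_mul, ← hadd]
    exact Fintype.sum_equiv (Equiv.addLeft c) _ _ fun x => rfl
  calc (∑ c : K, tmat (ι c) * ∑ c' : K, tmat (ι c')) = ∑ _c : K, cmat ι := by
        exact Finset.sum_congr rfl fun c _ => this c
    _ = (Fintype.card K : ℂ) • cmat ι := by
        rw [Finset.sum_const, Finset.card_univ, Nat.cast_smul_eq_nsmul]

lemma jmat_mul_cmat (ι : K → G) : jmat G * cmat ι = (Fintype.card K : ℂ) • jmat G := by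
  rw [cmat, Finset.mul_sum]
  simp_rw [jmat_mul_tmat]
  rw [Finset.sum_const, Finset.card_univ, Nat.cast_smul_eq_nsmul]

lemma cmat_mul_jmat (ι : K → G) : cmat ι * jmat G = (Fintype.card K : ℂ) • jmat G := by
  rw [cmat, Finset.sum_mul]
  simp_rw [tmat_mul_jmat]
  rw [Finset.sum_const, Finset.card_univ, Nat.cast_smul_eq_nsmul]

lemma commute_tmat_cmat (h : G) (ι : K → G) : Commute (tmat h) (cmat ι) :=
  Commute.sum_right _ _ _ fun c _ => commute_tmat h (ι c)

lemma commute_tmat_jmat (h : G) : Commute (tmat h) (jmat G) :=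
  Commute.sum_right _ _ _ fun c _ => commute_tmat h c

lemma commute_cmat_jmat (ι : K → G) : Commute (cmat ι) (jmat G) :=
  Commute.sum_left _ _ _ fun c _ => commute_tmat_jmat (ι c)

end JC

section Key
variable {G K : Type*} [AddCommGroup G] [Fintype G] [DecidableEq G] [AddCommGroup K] [Fintype K]

lemma key_exp (ι : K → G) (hadd : ∀ a b : K, ι (a + b) = ι a + ι b) (g : G) (hg2 : g + g = 0)
    (θ : ℝ)
    (h1 : Complex.exp (Complex.I * θ * (Fintype.card K : ℂ)) = 1)
    (h2 : Complex.exp (-(Complex.I * θ) * (Fintype.card G : ℂ)) = 1) :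
    NormedSpace.exp ((-(Complex.I * (θ : ℂ))) • (jmat G - tmat g - cmat ι)) =
      ((Complex.exp (Complex.I * θ) + Complex.exp (-(Complex.I * θ))) / 2) • (1 : Matrix G G ℂ) +
      ((Complex.exp (Complex.I * θ) - Complex.exp (-(Complex.I * θ))) / 2) • tmat g := by
  letI : SeminormedRing (Matrix G G ℂ) := Matrix.linftyOpSemiNormedRing
  letI : NormedRing (Matrix G G ℂ) := Matrix.linftyOpNormedRing
  letI : NormedAlgebra ℂ (Matrix G G ℂ) := Matrix.linftyOpNormedAlgebra
  set z : ℂ := Complex.I * θ with hz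
  set P : Matrix G G ℂ := tmat g with hPdef
  set C : Matrix G G ℂ := cmat ι with hCdef
  set J : Matrix G G ℂ := jmat G with hJdef
  have hpK : (0 : ℕ) < Fintype.card K := Fintype.card_pos
  have hNG : (0 : ℕ) < Fintype.card G := Fintype.card_pos
  have hpK' : (Fintype.card K : ℂ) ≠ 0 := Nat.cast_ne_zero.2 hpK.ne'
  have hNG' : (Fintype.card G : ℂ) ≠ 0 := Nat.cast_ne_zero.2 hNG.ne'
  have hP2 : P * P = 1 := by rw [hPdef, tmat_mul, hg2, tmat_zero]
  have hC2 : C * C = (Fintype.card K : ℂ) • C := cmat_mul_cmat ι hadd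
  have hJ2 : J * J = (Fintype.card G : ℂ) • J := jmat_mul_jmat
  have hPC : Commute P C := commute_tmat_cmat g ι
  have hPJ : Commute P J := commute_tmat_jmat g
  have hCJ : Commute C J := commute_cmat_jmat ι
  have hJP : J * P = J := jmat_mul_tmat g
  have hJC : J * C = (Fintype.card K : ℂ) • J := jmat_mul_cmat ι
  -- the idempotents
  set Q : Matrix G G ℂ := (2:ℂ)⁻¹ • (1 + P) with hQdef
  set Ch : Matrix G G ℂ := ((Fintype.card K : ℂ))⁻¹ • C with hChdef
  set Jh : Matrix G G ℂ := ((Fintype.card G : ℂ))⁻¹ • J with hJhdef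
  have hQ : Q * Q = Q := by
    rw [hQdef, smul_mul_smul_comm]
    have expand : (1 + P) * (1 + P) = 1 + P + (P + 1) := by
      simp only [mul_add, add_mul, one_mul, mul_one, hP2]
    rw [expand]
    match_scalars <;> ring
  have hCh : Ch * Ch = Ch := by
    rw [hChdef, smul_mul_smul_comm, hC2]
    match_scalars
    field_simp
  have hJh : Jh * Jh = Jh := by
    rw [hJhdef, smul_mul_smul_comm, hJ2]
    match_scalars
    field_simp
  -- decomposition
  have hM : (-(Complex.I * (θ:ℂ))) • (J - P - C) =
      (((-z) • (1 : Matrix G G ℂ)) + ((2*z) • Q)) + ((z * (Fintype.card K : ℂ)) • Ch)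
        + ((-(z * (Fintype.card G : ℂ))) • Jh) := by
    rw [hQdef, hChdef, hJhdef]
    match_scalars <;> field_simp <;> ring
  rw [hM]
  -- commutation facts
  have c1 : Commute (((-z) • (1 : Matrix G G ℂ)) + ((2*z) • Q))
      ((z * (Fintype.card K : ℂ)) • Ch) := by
    apply Commute.add_left
    · exact ((Commute.one_left _).smul_left _).smul_right _
    · refine (Commute.smul_left ?_ _).smul_right _
      rw [hQdef, hChdef]
      refine (Commute.smul_left ?_ _).smul_right _
      exact Commute.add_left (Commute.one_left _) hPC
  have c2 : Commute ((((-z) • (1 : Matrix G G ℂ)) + ((2*z) • Q))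
      + ((z * (Fintype.card K : ℂ)) • Ch)) ((-(z * (Fintype.card G : ℂ))) • Jh) := by
    apply Commute.add_left
    apply Commute.add_left
    · exact ((Commute.one_left _).smul_left _).smul_right _
    · refine (Commute.smul_left ?_ _).smul_right _
      rw [hQdef, hJhdef]
      refine (Commute.smul_left ?_ _).smul_right _
      exact Commute.add_left (Commute.one_left _) hPJ
    · refine (Commute.smul_left ?_ _).smul_right _
      rw [hChdef, hJhdef]
      exact (hCJ.smul_left _).smul_right _
  have c0 : Commute ((-z) • (1 : Matrix G G ℂ)) ((2*z) • Q) :=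
    ((Commute.one_left _).smul_left _).smul_right _
  rw [Matrix.exp_add_of_commute _ _ c2, Matrix.exp_add_of_commute _ _ c1,
    Matrix.exp_add_of_commute _ _ c0]
  erw [exp_smul_idem' _ _ (one_mul (1 : Matrix G G ℂ)), exp_smul_idem' _ _ hQ,
    exp_smul_idem' _ _ hCh, exp_smul_idem' _ _ hJh]
  rw [show z * (Fintype.card K : ℂ) = Complex.I * θ * (Fintype.card K : ℂ) from rfl, h1]
  rw [show -(z * (Fintype.card G : ℂ)) = -(Complex.I * θ) * (Fintype.card G : ℂ) by rw [hz]; ring,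
    h2]
  simp only [sub_self, zero_smul, add_zero, mul_one]
  -- now the remaining product
  have hu : Complex.exp (2 * z) = Complex.exp z * Complex.exp z := by
    rw [two_mul, Complex.exp_add]
  have huv : Complex.exp z * Complex.exp (-z) = 1 := by
    rw [← Complex.exp_add]; simp
  rw [hQdef]
  have expand : (1 + (Complex.exp (-z) - 1) • (1 : Matrix G G ℂ)) *
      (1 + (Complex.exp (2 * z) - 1) • ((2:ℂ)⁻¹ • (1 + P))) =
      (Complex.exp (-z) + Complex.exp (-z) * (Complex.exp (2 * z) - 1) * 2⁻¹) • 1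
        + (Complex.exp (-z) * (Complex.exp (2 * z) - 1) * 2⁻¹) • P := by
    simp only [mul_add, add_mul, mul_one, one_mul, smul_mul_assoc, mul_smul_comm, smul_smul,
      smul_add]
    match_scalars <;> ring
  rw [expand]
  match_scalars
  · linear_combination (Complex.exp (-z) * 2⁻¹) * hu + (Complex.exp z * 2⁻¹) * huv
  · linear_combination (Complex.exp (-z) * 2⁻¹) * hu + (Complex.exp z * 2⁻¹) * huv

end Key


theorem stmt_18 (p s : ℕ) [NeZero p] (hp : p.Prime) (hpodd : Odd p) (hs : 2 ≤ s) :
    ∀ a b : ZMod 2 × (Fin s → ZMod p),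
      b - a = ((1 : ZMod 2), (0 : Fin s → ZMod p)) →
      ExhibitsFR
        (Finset.univ \
          ((({((1 : ZMod 2), (0 : Fin s → ZMod p))} : Finset (ZMod 2 × (Fin s → ZMod p))) ∪
            ((Finset.Ico 1 p).image fun j : ℕ =>
              ((0 : ZMod 2), Pi.single (⟨0, by omega⟩ : Fin s) ((j : ZMod p))))) ∪ {0}))
        a b := by
  intro a b hab
  unfold ExhibitsFR
  have hpne2 : p ≠ 2 := fun h => by simp [h, Nat.odd_iff] at hpodd
  have hp3 : 3 ≤ p := by have := hp.two_le; omega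
  have hppos : 0 < p := by omega
  have hpC : (p : ℂ) ≠ 0 := Nat.cast_ne_zero.2 (by omega)
  set i0 : Fin s := ⟨0, by omega⟩ with hi0
  set ι : ZMod p → (ZMod 2 × (Fin s → ZMod p)) := fun c => ((0 : ZMod 2), Pi.single i0 c) with hι
  set g : (ZMod 2 × (Fin s → ZMod p)) := ((1 : ZMod 2), (0 : Fin s → ZMod p)) with hg
  have hadd : ∀ c c' : ZMod p, ι (c + c') = ι c + ι c' := by
    intro c c'
    simp [hι, Pi.single_add, Prod.ext_iff]
  have hιinj : Function.Injective ι := by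
    intro c c' h
    have := congrArg (fun w : (ZMod 2 × (Fin s → ZMod p)) => w.2 i0) h
    simpa [hι] using this
  have hgι : ∀ c : ZMod p, g ≠ ι c := by
    intro c h
    have := congrArg (fun w : (ZMod 2 × (Fin s → ZMod p)) => w.1) h
    simp only [hι, hg] at this
    exact one_ne_zero this
  have hg2 : g + g = 0 := by
    rw [hg]
    have : (1 : ZMod 2) + 1 = 0 := by decide
    simp [Prod.ext_iff, this]
  -- the big finset
  set T : Finset (ZMod 2 × (Fin s → ZMod p)) :=
    (({g} : Finset (ZMod 2 × (Fin s → ZMod p))) ∪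
      ((Finset.Ico 1 p).image fun j : ℕ => ((0 : ZMod 2), Pi.single i0 ((j : ZMod p))))) ∪ {0}
    with hT
  have hmemT : ∀ z : (ZMod 2 × (Fin s → ZMod p)), z ∈ T ↔ (z = g ∨ ∃ c : ZMod p, z = ι c) := by
    intro z
    rw [hT]
    simp only [Finset.mem_union, Finset.mem_singleton, Finset.mem_image, Finset.mem_Ico]
    constructor
    · rintro ((rfl | ⟨j, ⟨hj1, hj2⟩, rfl⟩) | rfl)
      · exact Or.inl rfl
      · exact Or.inr ⟨(j : ZMod p), rfl⟩
      · refine Or.inr ⟨0, ?_⟩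
        simp [hι]
        rfl
    · rintro (rfl | ⟨c, rfl⟩)
      · exact Or.inl (Or.inl rfl)
      · by_cases hc : c = 0
        · subst hc
          refine Or.inr ?_
          simp [hι]
        · refine Or.inl (Or.inr ⟨c.val, ⟨?_, ZMod.val_lt c⟩, ?_⟩)
          · have : c.val ≠ 0 := fun h => hc ((ZMod.val_eq_zero c).mp h)
            omega
          · simp [hι, ZMod.natCast_val, ZMod.cast_id]
  -- adjacency identity
  have hadj : cayAdj (Finset.univ \ T) = jmat (ZMod 2 × (Fin s → ZMod p)) - tmat g - cmat ι := by
    ext x y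
    have hjentry : jmat (ZMod 2 × (Fin s → ZMod p)) x y = 1 := by
      rw [jmat, Matrix.sum_apply]
      simp_rw [tmat_apply]
      rw [Finset.sum_ite_eq Finset.univ (x - y) (fun _ => (1 : ℂ))]
      simp
    have hcentry : cmat ι x y = ∑ c : ZMod p, if x - y = ι c then (1 : ℂ) else 0 := by
      rw [cmat, Matrix.sum_apply]
      simp_rw [tmat_apply]
    simp only [cayAdj, Matrix.of_apply, Matrix.sub_apply, hjentry, hcentry, tmat_apply]
    simp only [Finset.mem_sdiff, Finset.mem_univ, true_and, hmemT (x - y)]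
    by_cases h1 : x - y = g
    · rw [if_neg (by tauto), if_pos h1]
      have hsum0 : (∑ c : ZMod p, if x - y = ι c then (1 : ℂ) else 0) = 0 :=
        Finset.sum_eq_zero fun c _ => if_neg (h1 ▸ hgι c)
      rw [hsum0]
      ring
    · by_cases h2 : ∃ c : ZMod p, x - y = ι c
      · obtain ⟨c0, hc0⟩ := h2
        rw [if_neg (by tauto), if_neg h1]
        have hsum1 : (∑ c : ZMod p, if x - y = ι c then (1 : ℂ) else 0) = 1 := by
          rw [Finset.sum_eq_single c0]
          · rw [if_pos hc0]
          · intro c _ hne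
            exact if_neg fun h => hne (hιinj (h.symm.trans hc0))
          · intro h
            exact absurd (Finset.mem_univ c0) h
        rw [hsum1]
        ring
      · rw [if_pos (by tauto), if_neg h1]
        have hsum0 : (∑ c : ZMod p, if x - y = ι c then (1 : ℂ) else 0) = 0 :=
          Finset.sum_eq_zero fun c _ => if_neg (fun h => h2 ⟨c, h⟩)
        rw [hsum0]
        ring
  -- choose time
  set θ : ℝ := 2 * Real.pi / p with hθ
  have hθpos : 0 < θ := by
    rw [hθ]
    positivity
  have hcardK : (Fintype.card (ZMod p) : ℂ) = (p : ℂ) := by rw [ZMod.card]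
  have hcardG : (Fintype.card (ZMod 2 × (Fin s → ZMod p)) : ℂ) = 2 * (p : ℂ) ^ s := by
    rw [Fintype.card_prod, ZMod.card, Fintype.card_fun, ZMod.card, Fintype.card_fin]
    push_cast
    ring
  have hθp : (θ : ℂ) * (p : ℂ) = 2 * Real.pi := by
    rw [hθ]
    push_cast
    field_simp
  have h1 : Complex.exp (Complex.I * θ * (Fintype.card (ZMod p) : ℂ)) = 1 := by
    rw [hcardK, mul_assoc, hθp, mul_comm]
    exact Complex.exp_two_pi_mul_I
  have h2 : Complex.exp (-(Complex.I * θ) * (Fintype.card (ZMod 2 × (Fin s → ZMod p)) : ℂ)) = 1 := by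
    rw [hcardG]
    have hps : (p : ℂ) ^ s = (p : ℂ) ^ (s - 1) * p := by
      rw [← pow_succ]
      congr 1
      omega
    have hkey : -(Complex.I * θ) * (2 * (p:ℂ) ^ s) = (-(2 * (p:ℝ) ^ (s-1) ) : ℝ) * (2 * Real.pi * Complex.I) := by
      rw [hps]
      push_cast
      linear_combination (-(2:ℂ) * Complex.I * (p:ℂ)^(s-1)) * hθp
    rw [hkey]
    have hint : ((-(2 * (p:ℝ) ^ (s-1)) : ℝ) : ℂ) = ((-(2 * (p:ℤ) ^ (s-1)) : ℤ) : ℂ) := by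
      push_cast
      ring
    rw [hint]
    exact Complex.exp_int_mul_two_pi_mul_I _
  -- main exp computation
  have hexp := key_exp ι hadd g hg2 θ h1 h2
  refine ⟨θ, hθpos, (Complex.exp (Complex.I * θ) + Complex.exp (-(Complex.I * θ))) / 2,
    (Complex.exp (Complex.I * θ) - Complex.exp (-(Complex.I * θ))) / 2, ?_, ?_, ?_⟩
  · -- β ≠ 0
    have hv : Complex.exp (-(Complex.I * (θ:ℂ))) = Complex.cos θ - Complex.sin θ * Complex.I := by
      rw [show -(Complex.I * (θ:ℂ)) = (-(θ:ℂ)) * Complex.I by ring, Complex.exp_mul_I,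
        Complex.cos_neg, Complex.sin_neg]
      ring
    have hu : Complex.exp (Complex.I * (θ:ℂ)) = Complex.cos θ + Complex.sin θ * Complex.I := by
      rw [mul_comm, Complex.exp_mul_I]
    have hβ : (Complex.exp (Complex.I * θ) - Complex.exp (-(Complex.I * θ))) / 2
        = (Real.sin θ : ℂ) * Complex.I := by
      rw [hu, hv, Complex.ofReal_sin]
      ring
    rw [hβ]
    have hθltpi : θ < Real.pi := by
      rw [hθ, div_lt_iff₀ (by positivity : (0:ℝ) < (p:ℝ))]
      have : (3 : ℝ) ≤ (p : ℝ) := by exact_mod_cast hp3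
      nlinarith [Real.pi_pos]
    have hsinpos : 0 < Real.sin θ := Real.sin_pos_of_pos_of_lt_pi hθpos hθltpi
    exact mul_ne_zero (Complex.ofReal_ne_zero.2 hsinpos.ne') Complex.I_ne_zero
  · -- modulus condition
    have hv : Complex.exp (-(Complex.I * (θ:ℂ))) = Complex.cos θ - Complex.sin θ * Complex.I := by
      rw [show -(Complex.I * (θ:ℂ)) = (-(θ:ℂ)) * Complex.I by ring, Complex.exp_mul_I,
        Complex.cos_neg, Complex.sin_neg]
      ring
    have hu : Complex.exp (Complex.I * (θ:ℂ)) = Complex.cos θ + Complex.sin θ * Complex.I := by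
      rw [mul_comm, Complex.exp_mul_I]
    have hβ : (Complex.exp (Complex.I * θ) - Complex.exp (-(Complex.I * θ))) / 2
        = (Real.sin θ : ℂ) * Complex.I := by
      rw [hu, hv, Complex.ofReal_sin]
      ring
    have hα : (Complex.exp (Complex.I * θ) + Complex.exp (-(Complex.I * θ))) / 2
        = (Real.cos θ : ℂ) := by
      rw [hu, hv, Complex.ofReal_cos]
      ring
    rw [hα, hβ]
    rw [norm_mul, Complex.norm_I, Complex.norm_real, Complex.norm_real, mul_one,
      Real.norm_eq_abs, Real.norm_eq_abs,
      sq_abs, sq_abs]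
    linarith [Real.sin_sq_add_cos_sq θ]
  · -- the mulVec identity
    have hH : cayH (Finset.univ \ T) θ =
        ((Complex.exp (Complex.I * θ) + Complex.exp (-(Complex.I * θ))) / 2) • (1 : Matrix (ZMod 2 × (Fin s → ZMod p)) (ZMod 2 × (Fin s → ZMod p)) ℂ) +
        ((Complex.exp (Complex.I * θ) - Complex.exp (-(Complex.I * θ))) / 2) • tmat g := by
      rw [cayH, hadj]
      exact hexp
    rw [hH]
    rw [Matrix.add_mulVec, Matrix.smul_mulVec, Matrix.smul_mulVec, Matrix.one_mulVec]
    have hb : b = g + a := by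
      rw [← hab]
      abel
    have hPvec : tmat g *ᵥ (Pi.single a 1 : (ZMod 2 × (Fin s → ZMod p)) → ℂ) = Pi.single b 1 := by
      funext x
      simp only [Matrix.mulVec_single, tmat_apply, Pi.single_apply, mul_one, Pi.smul_apply,
        Matrix.col_apply, op_smul_eq_mul]
      simp only [sub_eq_iff_eq_add]
      rw [hb]
    rw [hPvec]
end

section
/- Let m ≥ 4 be an integer and let G = (ℤ_2)^m. Let S = {(1,1,1,0,…,0), (0,1,1,0,…,0), (1,1,0,0,…,0)} ⊆ G (each vector has m coordinates, with the indicated entries in the first three coordinates and 0 elsewhere). Then for all a, b ∈ G with b − a = (1, 1, …, 1) (the all-ones vector), the complement of Cay(G, S), namely Cay(G, G \ (S ∪ {0})), does not exhibit PGFR between a and b. -/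
open Matrix Filter

section aux
variable {n : Type*} [Fintype n] [DecidableEq n]

lemma vecMul_smul_matrix (v : n → ℂ) (c : ℂ) (M : Matrix n n ℂ) :
    v ᵥ* (c • M) = c • (v ᵥ* M) := by
  ext i
  simp [Matrix.vecMul, dotProduct, Finset.mul_sum, mul_left_comm]

lemma vecMul_exp (M : Matrix n n ℂ) (v : n → ℂ) (μ : ℂ)
    (h : v ᵥ* M = μ • v) :
    v ᵥ* (NormedSpace.exp M) = NormedSpace.exp μ • v := by
  letI : SeminormedRing (Matrix n n ℂ) := Matrix.linftyOpSemiNormedRing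
  letI : NormedRing (Matrix n n ℂ) := Matrix.linftyOpNormedRing
  letI : NormedAlgebra ℂ (Matrix n n ℂ) := Matrix.linftyOpNormedAlgebra
  have hpow : ∀ k : ℕ, v ᵥ* (M ^ k) = (μ ^ k) • v := by
    intro k
    induction k with
    | zero => simp
    | succ k ih =>
      rw [pow_succ, ← Matrix.vecMul_vecMul, ih, Matrix.smul_vecMul, h, smul_smul, pow_succ]
  set L : Matrix n n ℂ →L[ℂ] (n → ℂ) :=
    LinearMap.toContinuousLinearMap
      { toFun := fun A => v ᵥ* A
        map_add' := fun A B => Matrix.vecMul_add A B v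
        map_smul' := fun c A => vecMul_smul_matrix v c A } with hL
  have hsum : Summable fun k : ℕ => ((Nat.factorial k : ℂ))⁻¹ • M ^ k :=
    NormedSpace.expSeries_summable' (𝕂 := ℂ) M
  have := L.map_tsum hsum
  rw [NormedSpace.exp_eq_tsum ℂ]
  have hLdef : ∀ A : Matrix n n ℂ, L A = v ᵥ* A := fun A => rfl
  rw [show v ᵥ* (∑' k : ℕ, ((Nat.factorial k : ℂ))⁻¹ • M ^ k)
      = L (∑' k : ℕ, ((Nat.factorial k : ℂ))⁻¹ • M ^ k) from rfl, this]
  have : ∀ k : ℕ, L (((Nat.factorial k : ℂ))⁻¹ • M ^ k)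
      = (((Nat.factorial k : ℂ))⁻¹ * μ ^ k) • v := by
    intro k
    rw [hLdef, vecMul_smul_matrix, hpow, smul_smul]
  have hsμ : Summable fun k : ℕ => ((Nat.factorial k : ℂ))⁻¹ * μ ^ k := by
    simpa only [smul_eq_mul] using NormedSpace.expSeries_summable' (𝕂 := ℂ) μ
  rw [tsum_congr this, hsμ.tsum_smul_const, NormedSpace.exp_eq_tsum ℂ]
  simp only [smul_eq_mul]

end aux

noncomputable def sgn : ZMod 2 → ℂ := fun u => if u = 0 then 1 else -1

lemma sgn_add (u v : ZMod 2) : sgn (u + v) = sgn u * sgn v := by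
  rcases (show ∀ w : ZMod 2, w = 0 ∨ w = 1 by decide) u with rfl | rfl <;>
    rcases (show ∀ w : ZMod 2, w = 0 ∨ w = 1 by decide) v with rfl | rfl <;>
    simp [sgn, show (1 + 1 : ZMod 2) = 0 by decide, show (1 : ZMod 2) ≠ 0 by decide]

lemma sgn_zero : sgn 0 = 1 := rfl
lemma sgn_one : sgn 1 = -1 := by norm_num [sgn]
lemma sgn_ne_zero (u : ZMod 2) : sgn u ≠ 0 := by
  rcases (show ∀ w : ZMod 2, w = 0 ∨ w = 1 by decide) u with rfl | rfl <;>
    simp [sgn, show (1 : ZMod 2) ≠ 0 by decide]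

variable {m : ℕ}

noncomputable def chi (c x : Fin m → ZMod 2) : ℂ := sgn (∑ j, c j * x j)

lemma chi_add (c x y : Fin m → ZMod 2) : chi c (x + y) = chi c x * chi c y := by
  unfold chi
  rw [← sgn_add]
  congr 1
  rw [← Finset.sum_add_distrib]
  exact Finset.sum_congr rfl fun j _ => by simp [mul_add]

lemma chi_ne_zero (c x : Fin m → ZMod 2) : chi c x ≠ 0 := sgn_ne_zero _

lemma vecMul_cayAdj (S : Finset (Fin m → ZMod 2)) (c : Fin m → ZMod 2) :
    (chi c) ᵥ* (cayAdj S) = (∑ s ∈ S, chi c s) • chi c := by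
  ext y
  simp only [Matrix.vecMul, dotProduct, cayAdj, Matrix.of_apply, Pi.smul_apply,
    smul_eq_mul, mul_ite, mul_one, mul_zero]
  have key : ∑ x, (if x - y ∈ S then chi c x else 0)
      = ∑ s, (if s ∈ S then chi c s * chi c y else 0) :=
    (Fintype.sum_equiv (Equiv.addRight y)
      (fun s => if s ∈ S then chi c s * chi c y else 0)
      (fun x => if x - y ∈ S then chi c x else 0)
      (fun s => by
        simp only [Equiv.coe_addRight, add_sub_cancel_right]
        by_cases hs : s ∈ S
        · simp only [hs, if_true, chi_add]
        · simp [hs])).symm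
  rw [key, Finset.sum_ite_mem, Finset.univ_inter, Finset.sum_mul]

lemma sum_chi_eq_zero {c z : Fin m → ZMod 2} (hz : chi c z = -1) :
    ∑ x, chi c x = 0 := by
  have h1 : ∑ x : Fin m → ZMod 2, chi c (x + z) = ∑ x, chi c x :=
    Fintype.sum_equiv (Equiv.addRight z) _ _ (fun x => rfl)
  have h2 : ∑ x : Fin m → ZMod 2, chi c (x + z) = (∑ x, chi c x) * (-1) := by
    calc ∑ x : Fin m → ZMod 2, chi c (x + z) = ∑ x : Fin m → ZMod 2, chi c x * (-1) :=
          Finset.sum_congr rfl fun x _ => by rw [chi_add, hz]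
      _ = (∑ x : Fin m → ZMod 2, chi c x) * (-1) := by rw [Finset.sum_mul]
  have h := h1.symm.trans h2
  linear_combination h / 2

lemma chi_tendsto (S' : Finset (Fin m → ZMod 2)) (c a b : Fin m → ZMod 2)
    (α β : ℂ) (t : ℕ → ℝ)
    (htend : Tendsto (fun k => (cayH S' (t k)).mulVec ((Pi.single a 1 : (Fin m → ZMod 2) → ℂ)))
      atTop (nhds (α • (Pi.single a 1 : (Fin m → ZMod 2) → ℂ)
        + β • (Pi.single b 1 : (Fin m → ZMod 2) → ℂ)))) :
    Tendsto (fun k => NormedSpace.exp ((-(Complex.I * (t k : ℂ))) * (∑ s ∈ S', chi c s)))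
      atTop (nhds (α + β * chi c (b - a))) := by
  have hcont : Continuous fun u : (Fin m → ZMod 2) → ℂ => (chi c) ⬝ᵥ u := by
    unfold dotProduct
    exact continuous_finset_sum _ fun x _ => continuous_const.mul (continuous_apply x)
  have h1 := (hcont.tendsto _).comp htend
  have hvec : ∀ τ : ℝ, (chi c) ᵥ* (cayH S' τ)
      = NormedSpace.exp ((-(Complex.I * (τ : ℂ))) * (∑ s ∈ S', chi c s)) • chi c := by
    intro τ
    apply vecMul_exp
    rw [vecMul_smul_matrix, vecMul_cayAdj, smul_smul]
  have heq : ∀ k, (chi c) ⬝ᵥ ((cayH S' (t k)).mulVec (Pi.single a 1))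
      = NormedSpace.exp ((-(Complex.I * (t k : ℂ))) * (∑ s ∈ S', chi c s)) * chi c a := by
    intro k
    rw [Matrix.dotProduct_mulVec, hvec]
    simp [smul_dotProduct, dotProduct_single]
  have hlim : (chi c) ⬝ᵥ (α • (Pi.single a 1 : (Fin m → ZMod 2) → ℂ)
      + β • (Pi.single b 1 : (Fin m → ZMod 2) → ℂ)) = α * chi c a + β * chi c b := by
    simp [dotProduct_add, smul_dotProduct, dotProduct_single]
  rw [hlim] at h1
  have h2 : Tendsto (fun k =>
      (NormedSpace.exp ((-(Complex.I * (t k : ℂ))) * (∑ s ∈ S', chi c s)) * chi c a)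
        * (chi c a)⁻¹) atTop (nhds ((α * chi c a + β * chi c b) * (chi c a)⁻¹)) := by
    refine Tendsto.mul_const _ ?_
    have : (fun k => (chi c) ⬝ᵥ ((cayH S' (t k)).mulVec (Pi.single a 1)))
        = fun k => NormedSpace.exp ((-(Complex.I * (t k : ℂ))) * (∑ s ∈ S', chi c s))
            * chi c a := funext heq
    rw [← this]
    exact h1
  have hq : chi c a ≠ 0 := chi_ne_zero c a
  have hb : chi c b = chi c (b - a) * chi c a := by
    rw [← chi_add]; congr 1; abel
  have hfin : (α * chi c a + β * chi c b) * (chi c a)⁻¹ = α + β * chi c (b - a) := by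
    rw [hb]; field_simp
  rw [hfin] at h2
  have hfun : (fun k =>
      (NormedSpace.exp ((-(Complex.I * (t k : ℂ))) * (∑ s ∈ S', chi c s)) * chi c a)
        * (chi c a)⁻¹)
      = fun k => NormedSpace.exp ((-(Complex.I * (t k : ℂ))) * (∑ s ∈ S', chi c s)) := by
    funext k
    rw [mul_assoc, mul_inv_cancel₀ hq, mul_one]
  rwa [hfun] at h2

lemma dot_single (i : Fin m) (x : Fin m → ZMod 2) :
    ∑ j, (Pi.single i 1 : Fin m → ZMod 2) j * x j = x i := by
  simp [Pi.single_apply, ite_mul]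

lemma chi_two (i i' : Fin m) (x : Fin m → ZMod 2) :
    chi (Pi.single i 1 + Pi.single i' 1) x = sgn (x i + x i') := by
  unfold chi
  congr 1
  simp only [Pi.add_apply, add_mul, Finset.sum_add_distrib, dot_single]

lemma chi_three (i i' i'' : Fin m) (x : Fin m → ZMod 2) :
    chi (Pi.single i 1 + Pi.single i' 1 + Pi.single i'' 1) x
      = sgn (x i + x i' + x i'') := by
  unfold chi
  congr 1
  simp only [Pi.add_apply, add_mul, Finset.sum_add_distrib, dot_single]

lemma chi_zero' (c : Fin m → ZMod 2) : chi c 0 = 1 := by simp [chi, sgn_zero]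

lemma zadd11 : (1 + 1 : ZMod 2) = 0 := by decide

lemma sgn_two : sgn 2 = 1 := by rw [show (2 : ZMod 2) = 0 by decide, sgn_zero]
lemma sgn_three : sgn 3 = -1 := by rw [show (3 : ZMod 2) = 1 by decide, sgn_one]

set_option maxHeartbeats 1000000 in
theorem stmt_19 (m : ℕ) (hm : 4 ≤ m) :
    ∀ a b : Fin m → ZMod 2, (b - a = fun _ => 1) →
      ¬ ExhibitsPGFR
          (Finset.univ \
            (({(fun j : Fin m => if j.val < 3 then 1 else 0),
               (fun j : Fin m => if j.val = 1 ∨ j.val = 2 then 1 else 0),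
               (fun j : Fin m => if j.val < 2 then 1 else 0)} :
              Finset (Fin m → ZMod 2)) ∪ {0}))
          a b := by
  intro a b hab hP
  obtain ⟨α, β, t, hβ, -, htend⟩ := hP
  set s1 : Fin m → ZMod 2 := fun j => if j.val < 3 then 1 else 0 with hs1def
  set s2 : Fin m → ZMod 2 := fun j => if j.val = 1 ∨ j.val = 2 then 1 else 0 with hs2def
  set s3 : Fin m → ZMod 2 := fun j => if j.val < 2 then 1 else 0 with hs3def
  set S' : Finset (Fin m → ZMod 2) := Finset.univ \ (({s1, s2, s3} : Finset _) ∪ {0})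
    with hS'def
  have h0 : (0:ℕ) < m := by omega
  have h1 : (1:ℕ) < m := by omega
  have h2 : (2:ℕ) < m := by omega
  set i0 : Fin m := ⟨0, h0⟩ with hi0
  set i1 : Fin m := ⟨1, h1⟩ with hi1
  set i2 : Fin m := ⟨2, h2⟩ with hi2
  set c1 : Fin m → ZMod 2 := Pi.single i0 1 + Pi.single i1 1 with hc1
  set c2 : Fin m → ZMod 2 := Pi.single i0 1 + Pi.single i1 1 + Pi.single i2 1 with hc2
  -- evaluations
  have ev1_0 : s1 i0 = 1 := by simp [hs1def, hi0]
  have ev1_1 : s1 i1 = 1 := by simp [hs1def, hi1]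
  have ev1_2 : s1 i2 = 1 := by simp [hs1def, hi2]
  have ev2_0 : s2 i0 = 0 := by simp [hs2def, hi0]
  have ev2_1 : s2 i1 = 1 := by simp [hs2def, hi1]
  have ev2_2 : s2 i2 = 1 := by simp [hs2def, hi2]
  have ev3_0 : s3 i0 = 1 := by simp [hs3def, hi0]
  have ev3_1 : s3 i1 = 1 := by simp [hs3def, hi1]
  have ev3_2 : s3 i2 = 0 := by simp [hs3def, hi2]
  have hne01 : i0 ≠ i1 := Fin.ne_of_val_ne (by norm_num [hi0, hi1])
  -- distinctness
  have hne12 : s1 ≠ s2 := by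
    intro h; have := congrFun h i0; rw [ev1_0, ev2_0] at this; exact one_ne_zero this
  have hne13 : s1 ≠ s3 := by
    intro h; have := congrFun h i2; rw [ev1_2, ev3_2] at this; exact one_ne_zero this
  have hne23 : s2 ≠ s3 := by
    intro h; have := congrFun h i0; rw [ev2_0, ev3_0] at this; exact zero_ne_one this
  have hne10 : s1 ≠ 0 := by
    intro h; have := congrFun h i0; rw [ev1_0] at this; exact one_ne_zero this
  have hne20 : s2 ≠ 0 := by
    intro h; have := congrFun h i1; rw [ev2_1] at this; exact one_ne_zero this
  have hne30 : s3 ≠ 0 := by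
    intro h; have := congrFun h i0; rw [ev3_0] at this; exact one_ne_zero this
  -- chi formulas
  have hchi1 : ∀ x, chi c1 x = sgn (x i0 + x i1) := fun x => by rw [hc1, chi_two]
  have hchi2 : ∀ x, chi c2 x = sgn (x i0 + x i1 + x i2) := fun x => by rw [hc2, chi_three]
  -- sums over the whole group vanish
  have hz1 : chi c1 (Pi.single i0 1) = -1 := by
    rw [hchi1, Pi.single_eq_same, Pi.single_eq_of_ne hne01.symm, add_zero, sgn_one]
  have hz2 : chi c2 (Pi.single i0 1) = -1 := by
    have hne02 : i0 ≠ i2 := Fin.ne_of_val_ne (by norm_num [hi0, hi2])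
    rw [hchi2, Pi.single_eq_same, Pi.single_eq_of_ne hne01.symm,
      Pi.single_eq_of_ne hne02.symm, add_zero, add_zero, sgn_one]
  have hu1 : ∑ x : Fin m → ZMod 2, chi c1 x = 0 := sum_chi_eq_zero hz1
  have hu2 : ∑ x : Fin m → ZMod 2, chi c2 x = 0 := sum_chi_eq_zero hz2
  -- sums over the removed set
  have hTset : ({s1, s2, s3} : Finset (Fin m → ZMod 2)) ∪ {0}
      = insert s1 (insert s2 (insert s3 ({0} : Finset (Fin m → ZMod 2)))) := by
    ext x
    simp only [Finset.mem_union, Finset.mem_insert, Finset.mem_singleton]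
    tauto
  have hTsum : ∀ c : Fin m → ZMod 2,
      ∑ s ∈ (({s1, s2, s3} : Finset (Fin m → ZMod 2)) ∪ {0}), chi c s
        = chi c s1 + chi c s2 + chi c s3 + chi c 0 := by
    intro c
    rw [hTset, Finset.sum_insert (by simp [hne12, hne13, hne10]),
      Finset.sum_insert (by simp [hne23, hne20]),
      Finset.sum_insert (by simp [hne30]), Finset.sum_singleton]
    ring
  have hsplit : ∀ c : Fin m → ZMod 2, ∑ s ∈ S', chi c s
      = (∑ s : Fin m → ZMod 2, chi c s)
        - ∑ s ∈ (({s1, s2, s3} : Finset (Fin m → ZMod 2)) ∪ {0}), chi c s := by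
    intro c
    rw [hS'def, Finset.sum_sdiff_eq_sub (Finset.subset_univ _)]
  -- chi values on the connection set
  have v11 : chi c1 s1 = 1 := by rw [hchi1, ev1_0, ev1_1, zadd11, sgn_zero]
  have v12 : chi c1 s2 = -1 := by rw [hchi1, ev2_0, ev2_1, zero_add, sgn_one]
  have v13 : chi c1 s3 = 1 := by rw [hchi1, ev3_0, ev3_1, zadd11, sgn_zero]
  have v21 : chi c2 s1 = -1 := by
    rw [hchi2, ev1_0, ev1_1, ev1_2, zadd11, zero_add, sgn_one]
  have v22 : chi c2 s2 = 1 := by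
    rw [hchi2, ev2_0, ev2_1, ev2_2, zero_add, zadd11, sgn_zero]
  have v23 : chi c2 s3 = 1 := by
    rw [hchi2, ev3_0, ev3_1, ev3_2, zadd11, zero_add, sgn_zero]
  -- equal eigenvalues
  have hlam : ∑ s ∈ S', chi c1 s = ∑ s ∈ S', chi c2 s := by
    rw [hsplit c1, hsplit c2, hu1, hu2, hTsum c1, hTsum c2, v11, v12, v13, v21, v22, v23,
      chi_zero', chi_zero']
    norm_num
  -- convergence for both characters
  have T1 := chi_tendsto S' c1 a b α β t htend
  have T2 := chi_tendsto S' c2 a b α β t htend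
  rw [hlam] at T1
  have hun := tendsto_nhds_unique T1 T2
  -- compute both limits
  have hd1 : chi c1 (b - a) = 1 := by
    rw [hab, hchi1]; norm_num [sgn_two]
  have hd2 : chi c2 (b - a) = -1 := by
    rw [hab, hchi2]; norm_num [sgn_three]
  rw [hd1, hd2] at hun
  apply hβ
  linear_combination hun / 2
end
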